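/- Let k ≥ 1, let V_k ⊊ S*_k be a proper subspace, let x^u be the largest monomial of degree k (with respect to the fixed monomial order) that does not lie in V_k, and suppose i ∈ {0,1,…,n} is such that c_i(x^u) ∉ S_1 ⌟ V_k. Then c_i(x^u) is the largest monomial of degree k−1 that does not lie in S_1 ⌟ V_k. -/

import Mathlib

open MvPolynomial

noncomputable section

/-- The contraction operator `c_i` (apolarity action of the `i`-th dual variable):
`c_i(x^u) = x^{u−e_i}` if `u_i > 0` and `c_i(x^u) = 0` otherwise, extended linearly. -/
def contract {n : ℕ} (i : Fin (n + 1)) (f : MvPolynomial (Fin (n + 1)) ℂ) :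
    MvPolynomial (Fin (n + 1)) ℂ :=
  ∑ u ∈ f.support,
    if u i = 0 then 0 else monomial (u - Finsupp.single i 1) (f.coeff u)

/-- `S_1 ⌟ V`: the span of all contractions `c_i(f)` with `f ∈ V`. -/
def contractSpan {n : ℕ} (V : Submodule ℂ (MvPolynomial (Fin (n + 1)) ℂ)) :
    Submodule ℂ (MvPolynomial (Fin (n + 1)) ℂ) :=
  Submodule.span ℂ {g | ∃ i : Fin (n + 1), ∃ f ∈ V, g = contract i f}


lemma contract_monomial {n : ℕ} (i : Fin (n + 1)) (w : Fin (n + 1) →₀ ℕ) :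
    contract i (monomial w (1 : ℂ)) =
      if w i = 0 then 0 else monomial (w - Finsupp.single i 1) 1 := by
  simp [contract, support_monomial, coeff_monomial]

/-- If `x^u` is the largest degree-`k` monomial not in a proper subspace `V_k ⊊ S*_k` and
`c_i(x^u) ∉ S_1 ⌟ V_k`, then `c_i(x^u)` is the largest degree-`(k−1)` monomial not in
`S_1 ⌟ V_k`. -/
theorem escaping_contraction_is_largest (n k : ℕ) (hn : 1 ≤ n) (hk : 1 ≤ k)
    (lo : LinearOrder (Fin (n + 1) →₀ ℕ))
    (hlo : ∀ a b c : Fin (n + 1) →₀ ℕ, lo.lt a b → lo.lt (a + c) (b + c))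
    (Vk : Submodule ℂ (MvPolynomial (Fin (n + 1)) ℂ))
    (hVk : Vk ≤ homogeneousSubmodule (Fin (n + 1)) ℂ k)
    (hproper : Vk ≠ homogeneousSubmodule (Fin (n + 1)) ℂ k)
    (u : Fin (n + 1) →₀ ℕ) (hu : ∑ j, u j = k)
    (humem : (monomial u 1 : MvPolynomial (Fin (n + 1)) ℂ) ∉ Vk)
    (hmax : ∀ v : Fin (n + 1) →₀ ℕ, (∑ j, v j = k) →
      (monomial v 1 : MvPolynomial (Fin (n + 1)) ℂ) ∉ Vk → lo.le v u)
    (i : Fin (n + 1))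
    (hi : contract i (monomial u 1) ∉ contractSpan Vk) :
    contract i (monomial u 1) =
        (monomial (u - Finsupp.single i 1) 1 : MvPolynomial (Fin (n + 1)) ℂ) ∧
      (∑ j, (u - Finsupp.single i 1 : Fin (n + 1) →₀ ℕ) j = k - 1) ∧
      ∀ v : Fin (n + 1) →₀ ℕ, (∑ j, v j = k - 1) →
        (monomial v 1 : MvPolynomial (Fin (n + 1)) ℂ) ∉ contractSpan Vk →
        lo.le v (u - Finsupp.single i 1) := by

  have hui : u i ≠ 0 := by
    intro h
    apply hi
    rw [contract_monomial, if_pos h]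
    exact (contractSpan Vk).zero_mem
  have hc : contract i (monomial u 1) = (monomial (u - Finsupp.single i 1) 1 :
      MvPolynomial (Fin (n + 1)) ℂ) := by
    rw [contract_monomial, if_neg hui]
  have hle : Finsupp.single i 1 ≤ u := by
    intro j
    rcases eq_or_ne j i with rfl | hj
    · simpa [Finsupp.single_apply] using Nat.one_le_iff_ne_zero.mpr hui
    · simp [Finsupp.single_apply, Ne.symm hj]
  have hsub : (u - Finsupp.single i 1) + Finsupp.single i 1 = u := tsub_add_cancel_of_le hle
  have hsum1 : ∑ j, (Finsupp.single i 1 : Fin (n + 1) →₀ ℕ) j = 1 := by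
    simp [Finsupp.single_apply]
  have hdeg : ∑ j, (u - Finsupp.single i 1 : Fin (n + 1) →₀ ℕ) j = k - 1 := by
    have h2 := congrArg (fun w : Fin (n + 1) →₀ ℕ => ∑ j, w j) hsub
    simp only [Finsupp.add_apply, Finset.sum_add_distrib, hsum1, hu] at h2
    omega
  refine ⟨hc, hdeg, ?_⟩
  intro v hv hvmem
  by_contra hltc
  have hlt' : lo.lt (u - Finsupp.single i 1) v :=
    (lo.lt_iff_le_not_ge _ _).mpr ⟨(lo.le_total _ _).resolve_left hltc, hltc⟩
  have hlt2 : lo.lt u (v + Finsupp.single i 1) := by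
    have := hlo _ _ (Finsupp.single i 1) hlt'
    rwa [hsub] at this
  have hvsum : ∑ j, (v + Finsupp.single i 1 : Fin (n + 1) →₀ ℕ) j = k := by
    simp only [Finsupp.add_apply, Finset.sum_add_distrib, hsum1, hv]
    omega
  have hmem : (monomial (v + Finsupp.single i 1) 1 : MvPolynomial (Fin (n + 1)) ℂ) ∈ Vk := by
    by_contra hnm
    have := hmax _ hvsum hnm
    exact ((lo.lt_iff_le_not_ge _ _).mp hlt2).2 this
  apply hvmem
  apply Submodule.subset_span
  refine ⟨i, monomial (v + Finsupp.single i 1) 1, hmem, ?_⟩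
  rw [contract_monomial, if_neg (by simp [Finsupp.add_apply, Finsupp.single_apply]),
    add_tsub_cancel_right]
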